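/- For a random variable X ~ GPD(ξ, σ) with 0 < ξ < 1 and σ > 0, and 0 < p < 1, the Conditional Value at Risk is CVaR_p(X) = (σ/ξ)·((1-p)^(-ξ)/(1-ξ) - 1). -/

import Mathlib

open Set Filter MeasureTheory Topology

/-- For X ~ GPD(ξ,σ) with 0 < ξ < 1, σ > 0, and 0 < p < 1, the tail-expectation
CVaR_p(X) = (1/(1-p))·∫_{VaR_p}^{∞} x f(x) dx equals (σ/ξ)((1-p)^(-ξ)/(1-ξ) - 1),
where f(x) = (1/σ)(1+ξx/σ)^(-1-1/ξ) and VaR_p = (σ/ξ)((1-p)^(-ξ) - 1). -/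
theorem gpd_cvar (ξ σ p : ℝ) (hξ0 : 0 < ξ) (hξ1 : ξ < 1) (hσ : 0 < σ)
    (hp : 0 < p) (hp1 : p < 1) :
    (1 / (1 - p)) *
        ∫ x in Set.Ioi (σ / ξ * ((1 - p) ^ (-ξ) - 1)),
          x * ((1 / σ) * (1 + ξ * x / σ) ^ (-1 - 1 / ξ))
      = σ / ξ * ((1 - p) ^ (-ξ) / (1 - ξ) - 1) := by
  have hξ := hξ0.ne'
  have hσ' := hσ.ne'
  have hp' : 0 < 1 - p := by linarith
  set a : ℝ := (1 - p) ^ (-ξ) with ha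
  have ha1 : 1 < a := by
    rw [ha, Real.one_lt_rpow_iff_of_pos hp']
    exact Or.inr ⟨by linarith, by linarith⟩
  have ha0 : 0 < a := lt_trans one_pos ha1
  set v : ℝ := σ / ξ * (a - 1) with hv
  have hv0 : 0 < v := mul_pos (div_pos hσ hξ0) (by linarith)
  -- positivity of the base on [v, ∞)
  have hu : ∀ x : ℝ, v ≤ x → 0 < 1 + ξ * x / σ := by
    intro x hx
    have : 0 ≤ ξ * x / σ := div_nonneg (mul_nonneg hξ0.le (hv0.le.trans hx)) hσ.le
    linarith
  -- the antiderivative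
  set G : ℝ → ℝ := fun x =>
    σ / ξ ^ 2 * ((1 + ξ * x / σ) ^ (1 - 1/ξ) * (ξ / (ξ - 1)) + ξ * (1 + ξ * x / σ) ^ (-(1/ξ)))
    with hG
  have hderiv : ∀ x ∈ Set.Ici v,
      HasDerivAt G (x * ((1 / σ) * (1 + ξ * x / σ) ^ (-1 - 1 / ξ))) x := by
    intro x hx
    have hux : 0 < 1 + ξ * x / σ := hu x hx
    have hbase : HasDerivAt (fun x : ℝ => 1 + ξ * x / σ) (ξ / σ) x := by
      simpa using (((hasDerivAt_id x).const_mul ξ).div_const σ).const_add 1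
    have h1 : HasDerivAt (fun x : ℝ => (1 + ξ * x / σ) ^ (1 - 1/ξ))
        (ξ / σ * (1 - 1/ξ) * (1 + ξ * x / σ) ^ (1 - 1/ξ - 1)) x :=
      hbase.rpow_const (Or.inl hux.ne')
    have h2 : HasDerivAt (fun x : ℝ => (1 + ξ * x / σ) ^ (-(1/ξ)))
        (ξ / σ * (-(1/ξ)) * (1 + ξ * x / σ) ^ (-(1/ξ) - 1)) x :=
      hbase.rpow_const (Or.inl hux.ne')
    have h3 := ((h1.mul_const (ξ / (ξ - 1))).add (h2.const_mul ξ)).const_mul (σ / ξ ^ 2)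
    refine h3.congr_deriv ?_
    have e1 : (1 : ℝ) - 1/ξ - 1 = -1 - 1/ξ + 1 := by ring
    have e2 : -((1:ℝ)/ξ) - 1 = -1 - 1/ξ := by ring
    rw [e1, e2, Real.rpow_add hux, Real.rpow_one]
    have hξm1 : ξ - 1 ≠ 0 := by linarith
    generalize (1 + ξ * x / σ) ^ (-1 - 1/ξ) = t
    field_simp
    ring
  have hpos : ∀ x ∈ Set.Ioi v, 0 ≤ x * ((1 / σ) * (1 + ξ * x / σ) ^ (-1 - 1 / ξ)) := by
    intro x hx
    have hx0 : 0 < x := lt_trans hv0 hx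
    have hux : 0 < 1 + ξ * x / σ := hu x (le_of_lt hx)
    positivity
  have htend : Tendsto G atTop (𝓝 0) := by
    have hutop : Tendsto (fun x : ℝ => 1 + ξ * x / σ) atTop atTop := by
      apply tendsto_atTop_add_const_left
      exact (tendsto_id.const_mul_atTop hξ0).atTop_div_const hσ
    have hr1 : (0:ℝ) < 1/ξ - 1 := by
      rw [lt_sub_iff_add_lt, zero_add, lt_div_iff₀ hξ0, one_mul]; exact hξ1
    have hr2 : (0:ℝ) < 1/ξ := by positivity
    have t1 : Tendsto (fun x : ℝ => (1 + ξ * x / σ) ^ (1 - 1/ξ)) atTop (𝓝 0) := by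
      have := (tendsto_rpow_neg_atTop hr1).comp hutop
      refine this.congr fun x => ?_
      simp only [Function.comp]
      norm_num
    have t2 : Tendsto (fun x : ℝ => (1 + ξ * x / σ) ^ (-(1/ξ))) atTop (𝓝 0) :=
      (tendsto_rpow_neg_atTop hr2).comp hutop
    have h := (((t1.mul_const (ξ / (ξ - 1))).add (t2.const_mul ξ)).const_mul (σ / ξ ^ 2))
    have h0 : σ / ξ ^ 2 * (0 * (ξ / (ξ - 1)) + ξ * 0) = 0 := by ring
    rw [h0] at h
    exact h
  have hint := integral_Ioi_of_hasDerivAt_of_nonneg' hderiv hpos htend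
  rw [hv] at hint
  rw [hint]
  -- evaluate G at v
  have huv : 1 + ξ * (σ / ξ * (a - 1)) / σ = a := by field_simp; ring
  have hap : a ^ (-(1/ξ)) = 1 - p := by
    rw [ha, ← Real.rpow_mul hp'.le]
    have he : -ξ * -(1/ξ) = 1 := by field_simp
    rw [he, Real.rpow_one]
  have hap2 : a ^ (1 - 1/ξ) = a * (1 - p) := by
    have : (1:ℝ) - 1/ξ = 1 + (-(1/ξ)) := by ring
    rw [this, Real.rpow_add ha0, Real.rpow_one, hap]
  rw [hG]
  simp only [huv, hap, hap2]
  have hξ1' : ξ - 1 ≠ 0 := by linarith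
  have h1ξ : (1:ℝ) - ξ ≠ 0 := by linarith
  field_simp
  ring
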